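/- Let X and K be topological spaces and let d : K → X and s : X → K be any continuous maps. Then the map from the mapping torus T(d ∘ s) of d ∘ s : X → X to the mapping torus T(s ∘ d) of s ∘ d : K → K induced by (x, t) ↦ (s(x), t) is well defined, continuous, and a homotopy equivalence. -/

import Mathlib

/-- The relation generating the mapping torus of `α : Y → Y`: `(y, 0) ∼ (α y, 1)`. -/
def TorusRel {Y : Type*} (α : Y → Y) :
    Y × unitInterval → Y × unitInterval → Prop :=
  fun p q => p.2 = 0 ∧ q = (α p.1, 1)

/-- The mapping torus `T(α) = (Y × [0,1]) / ((y,0) ∼ (α y,1))` of `α : Y → Y`. -/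
def MappingTorus {Y : Type*} (α : Y → Y) : Type _ :=
  Quot (TorusRel α)

/-- The mapping torus carries the quotient topology. -/
instance {Y : Type*} [TopologicalSpace Y] (α : Y → Y) :
    TopologicalSpace (MappingTorus α) :=
  inferInstanceAs (TopologicalSpace (Quot (TorusRel α)))

section Aux

variable {Y Z : Type*} [TopologicalSpace Y] [TopologicalSpace Z]

/-- The induced map `T(v ∘ u) → T(u ∘ v)`, `(y,t) ↦ (u y, t)`. -/
noncomputable def inducedTorusMap (u : C(Y, Z)) (v : C(Z, Y)) :
    C(MappingTorus (⇑v ∘ ⇑u), MappingTorus (⇑u ∘ ⇑v)) where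
  toFun := Quot.lift (fun p => Quot.mk (TorusRel (⇑u ∘ ⇑v)) (u p.1, p.2))
    (by
      rintro p q ⟨h0, rfl⟩
      dsimp
      rw [h0]
      exact Quot.sound ⟨rfl, rfl⟩)
  continuous_toFun := by
    apply (isQuotientMap_quot_mk).continuous_iff.mpr
    exact continuous_quot_mk.comp ((u.continuous.comp continuous_fst).prodMk continuous_snd)

@[simp] lemma inducedTorusMap_mk (u : C(Y, Z)) (v : C(Z, Y)) (y : Y) (t : unitInterval) :
    inducedTorusMap u v (Quot.mk _ (y, t)) = Quot.mk (TorusRel (⇑u ∘ ⇑v)) (u y, t) := rfl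


lemma projIcc01_eq_zero {x : ℝ} (h : x ≤ 0) : Set.projIcc (0:ℝ) 1 zero_le_one x = 0 := by
  rw [Set.projIcc_of_le_left _ h]; rfl

lemma projIcc01_eq_one {x : ℝ} (h : 1 ≤ x) : Set.projIcc (0:ℝ) 1 zero_le_one x = 1 := by
  rw [Set.projIcc_of_right_le _ h]; rfl

lemma projIcc01_coe (t : unitInterval) : Set.projIcc (0:ℝ) 1 zero_le_one (t : ℝ) = t := by
  rw [Set.projIcc_of_mem _ ⟨t.2.1, t.2.2⟩]

lemma unitInterval.c0 : ((0 : unitInterval) : ℝ) = 0 := rfl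
lemma unitInterval.c1 : ((1 : unitInterval) : ℝ) = 1 := rfl

/-- auxiliary unquotiented homotopy -/
noncomputable def torusShiftAux (α : Y → Y) : unitInterval × (Y × unitInterval) → MappingTorus α :=
  fun p =>
    if (p.2.2 : ℝ) ≤ (p.1 : ℝ) then
      Quot.mk _ (α p.2.1, Set.projIcc (0:ℝ) 1 zero_le_one ((p.2.2 : ℝ) + 1 - (p.1 : ℝ)))
    else
      Quot.mk _ (p.2.1, Set.projIcc (0:ℝ) 1 zero_le_one ((p.2.2 : ℝ) - (p.1 : ℝ)))

lemma continuous_torusShiftAux (α : Y → Y) (hα : Continuous α) :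
    Continuous (torusShiftAux α) := by
  apply Continuous.if_le
  · exact continuous_quot_mk.comp
      ((hα.comp (continuous_fst.comp continuous_snd)).prodMk
        ((continuous_projIcc.comp
          (((continuous_subtype_val.comp (continuous_snd.comp continuous_snd)).add
            continuous_const).sub (continuous_subtype_val.comp continuous_fst)))))
  · exact continuous_quot_mk.comp
      ((continuous_fst.comp continuous_snd).prodMk
        (continuous_projIcc.comp
          ((continuous_subtype_val.comp (continuous_snd.comp continuous_snd)).sub
            (continuous_subtype_val.comp continuous_fst))))
  · exact continuous_subtype_val.comp (continuous_snd.comp continuous_snd)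
  · exact continuous_subtype_val.comp continuous_fst
  · intro p h
    have h1 : Set.projIcc (0:ℝ) 1 zero_le_one ((p.2.2 : ℝ) + 1 - (p.1 : ℝ)) = 1 := by
      rw [h]; exact projIcc01_eq_one (by linarith)
    have h0 : Set.projIcc (0:ℝ) 1 zero_le_one ((p.2.2 : ℝ) - (p.1 : ℝ)) = 0 := by
      rw [h]; exact projIcc01_eq_zero (by linarith)
    rw [h1, h0]
    exact (Quot.sound ⟨rfl, rfl⟩).symm

omit [TopologicalSpace Y] in
lemma torusShiftAux_wd (α : Y → Y) (t : unitInterval) (p q : Y × unitInterval)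
    (h : TorusRel α p q) : torusShiftAux α (t, p) = torusShiftAux α (t, q) := by
  obtain ⟨h0, rfl⟩ := h
  unfold torusShiftAux
  simp only [h0]
  erw [if_pos (show ((0 : unitInterval) : ℝ) ≤ (t : ℝ) by exact_mod_cast t.2.1)]
  by_cases ht : ((1 : unitInterval) : ℝ) ≤ (t : ℝ)
  · have ht1 : (t : ℝ) = 1 := le_antisymm t.2.2 (by exact_mod_cast ht)
    erw [if_pos ht]
    have e1 : Set.projIcc (0:ℝ) 1 zero_le_one (((0:unitInterval) : ℝ) + 1 - (t : ℝ)) = 0 := by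
      rw [ht1]; exact projIcc01_eq_zero (by rw [unitInterval.c0]; norm_num)
    have e2 : Set.projIcc (0:ℝ) 1 zero_le_one (((1:unitInterval) : ℝ) + 1 - (t : ℝ)) = 1 := by
      rw [ht1]; exact projIcc01_eq_one (by rw [unitInterval.c1]; norm_num)
    rw [e1, e2]
    exact Quot.sound ⟨rfl, rfl⟩
  · erw [if_neg ht]
    norm_num
    rfl

/-- The homotopy from the identity of `T(α)` to any map acting by `(y,t) ↦ (α y, t)`. -/
noncomputable def torusShift (α : Y → Y) (hα : Continuous α)
    (β : C(MappingTorus α, MappingTorus α))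
    (hβ : ∀ y t, β (Quot.mk _ (y, t)) = Quot.mk (TorusRel α) (α y, t)) :
    ContinuousMap.Homotopy (ContinuousMap.id (MappingTorus α)) β where
  toFun p := Quot.lift (fun q => torusShiftAux α (p.1, q)) (torusShiftAux_wd α p.1) p.2
  continuous_toFun := by
    apply (isQuotientMap_quot_mk (r := TorusRel α)).continuous_lift_prod_right
    exact continuous_torusShiftAux α hα
  map_zero_left := by
    apply Quot.ind
    rintro ⟨y, t⟩
    show torusShiftAux α (0, (y, t)) = Quot.mk _ (y, t)
    unfold torusShiftAux
    by_cases h : (t : ℝ) ≤ ((0 : unitInterval) : ℝ)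
    · erw [if_pos h]
      have ht : t = 0 := by
        ext; exact le_antisymm (by exact_mod_cast h) t.2.1
      subst ht
      have e : Set.projIcc (0:ℝ) 1 zero_le_one
          (((0:unitInterval) : ℝ) + 1 - ((0:unitInterval) : ℝ)) = 1 := by
        exact projIcc01_eq_one (by rw [unitInterval.c0]; norm_num)
      rw [e]
      exact (Quot.sound ⟨rfl, rfl⟩).symm
    · erw [if_neg h]
      have e : Set.projIcc (0:ℝ) 1 zero_le_one ((t : ℝ) - ((0:unitInterval) : ℝ)) = t := by
        rw [unitInterval.c0, sub_zero, projIcc01_coe]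
      rw [e]
  map_one_left := by
    apply Quot.ind
    rintro ⟨y, t⟩
    show torusShiftAux α (1, (y, t)) = β (Quot.mk _ (y, t))
    rw [hβ]
    unfold torusShiftAux
    erw [if_pos (show (t:ℝ) ≤ ((1:unitInterval):ℝ) by exact_mod_cast t.2.2)]
    have e : Set.projIcc (0:ℝ) 1 zero_le_one ((t : ℝ) + 1 - ((1:unitInterval) : ℝ)) = t := by
      rw [unitInterval.c1, add_sub_cancel_right, projIcc01_coe]
    rw [e]

end Aux

/-- For any continuous maps `d : K → X` and `s : X → K`, the map
`T(d ∘ s) → T(s ∘ d)` induced by `(x, t) ↦ (s x, t)` is well defined, continuous, and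
a homotopy equivalence. -/
theorem mappingTorus_induced_map_homotopyEquiv
    {X K : Type*} [TopologicalSpace X] [TopologicalSpace K]
    (d : C(K, X)) (s : C(X, K)) :
    ∃ F : C(MappingTorus (⇑d ∘ ⇑s), MappingTorus (⇑s ∘ ⇑d)),
      (∀ (x : X) (t : unitInterval),
        F (Quot.mk (TorusRel (⇑d ∘ ⇑s)) (x, t)) = Quot.mk (TorusRel (⇑s ∘ ⇑d)) (s x, t)) ∧
      ∃ G : C(MappingTorus (⇑s ∘ ⇑d), MappingTorus (⇑d ∘ ⇑s)),
        (G.comp F).Homotopic (ContinuousMap.id _) ∧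
        (F.comp G).Homotopic (ContinuousMap.id _) := by
  refine ⟨inducedTorusMap s d, fun x t => rfl, inducedTorusMap d s, ?_, ?_⟩
  · exact ⟨(torusShift (⇑d ∘ ⇑s) (d.continuous.comp s.continuous)
      ((inducedTorusMap d s).comp (inducedTorusMap s d)) (fun y t => rfl)).symm⟩
  · exact ⟨(torusShift (⇑s ∘ ⇑d) (s.continuous.comp d.continuous)
      ((inducedTorusMap s d).comp (inducedTorusMap d s)) (fun y t => rfl)).symm⟩
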